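/- For the potential f₂(q) = -1/q² and any q₀ > 0, the ratio of the average position to the initial position of the free fall equals π/4; concretely, (∫₀^{q₀} q/√(1/q² - 1/q₀²) dq) / (∫₀^{q₀} 1/√(1/q² - 1/q₀²) dq) = (π/4)·q₀. -/

import Mathlib

open Set Real MeasureTheory intervalIntegral

private lemma integrable_aux (q₀ : ℝ) (hq₀ : 0 < q₀) (n : ℕ) :
    IntervalIntegrable (fun q => q ^ n / Real.sqrt (q₀ ^ 2 - q ^ 2)) volume 0 q₀ := by
  have hbase : IntervalIntegrable (fun x : ℝ => x ^ (-(1/2) : ℝ)) volume 0 q₀ :=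
    intervalIntegral.intervalIntegrable_rpow' (by norm_num)
  have hcomp : IntervalIntegrable (fun x : ℝ => (q₀ - x) ^ (-(1/2) : ℝ)) volume 0 q₀ := by
    simpa using (hbase.comp_sub_left q₀).symm
  have hC := hcomp.const_mul (q₀ ^ n / Real.sqrt q₀)
  apply hC.mono_fun
  · apply Measurable.aestronglyMeasurable
    fun_prop
  · rw [Filter.EventuallyLE, ae_restrict_iff' measurableSet_uIoc]
    apply Filter.Eventually.of_forall
    intro q hq
    rw [uIoc_of_le hq₀.le] at hq
    obtain ⟨hq0, hq1⟩ := hq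
    have hsub : (0:ℝ) ≤ q₀ - q := by linarith
    have hrw : (q₀ - q) ^ (-(1/2) : ℝ) = (Real.sqrt (q₀ - q))⁻¹ := by
      rw [Real.rpow_neg hsub, Real.sqrt_eq_rpow]
    have hsplit : Real.sqrt (q₀ ^ 2 - q ^ 2)
        = Real.sqrt (q₀ + q) * Real.sqrt (q₀ - q) := by
      rw [show q₀^2 - q^2 = (q₀ + q) * (q₀ - q) by ring,
        Real.sqrt_mul (by linarith)]
    have hf : (0:ℝ) ≤ q ^ n / Real.sqrt (q₀ ^ 2 - q ^ 2) :=
      div_nonneg (pow_nonneg hq0.le n) (Real.sqrt_nonneg _)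
    have hg : (0:ℝ) ≤ q₀ ^ n / Real.sqrt q₀ * (q₀ - q) ^ (-(1/2) : ℝ) := by positivity
    rw [Real.norm_eq_abs, Real.norm_eq_abs, abs_of_nonneg hf, abs_of_nonneg hg, hrw, hsplit]
    rcases eq_or_lt_of_le hq1 with h | h
    · subst h
      simp
    · rw [div_eq_mul_inv (q₀^n), mul_assoc, ← mul_inv]
      rw [div_eq_mul_inv]
      apply mul_le_mul (pow_le_pow_left₀ hq0.le hq1 n)
      · apply inv_anti₀ (mul_pos (Real.sqrt_pos.2 hq₀) (Real.sqrt_pos.2 (by linarith)))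
        apply mul_le_mul_of_nonneg_right _ (Real.sqrt_nonneg _)
        exact Real.sqrt_le_sqrt (by linarith)
      · positivity
      · positivity

private lemma integral_A (q₀ : ℝ) (hq₀ : 0 < q₀) :
    ∫ q in (0:ℝ)..q₀, q / Real.sqrt (q₀ ^ 2 - q ^ 2) = q₀ := by
  have hint : IntervalIntegrable (fun q => q / Real.sqrt (q₀ ^ 2 - q ^ 2)) volume 0 q₀ := by
    simpa using integrable_aux q₀ hq₀ 1
  have h := intervalIntegral.integral_eq_sub_of_hasDeriv_right_of_le
    (f := fun q => -Real.sqrt (q₀ ^ 2 - q ^ 2))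
    (f' := fun q => q / Real.sqrt (q₀ ^ 2 - q ^ 2)) hq₀.le
    (by fun_prop)
    (fun x hx => by
      have hpos : 0 < q₀ ^ 2 - x ^ 2 := by nlinarith [hx.1, hx.2]
      have hsne : Real.sqrt (q₀ ^ 2 - x ^ 2) ≠ 0 := (Real.sqrt_pos.2 hpos).ne'
      have h1 : HasDerivAt (fun q : ℝ => q₀ ^ 2 - q ^ 2) (-(2 * x)) x := by
        simpa using (hasDerivAt_pow 2 x).const_sub (q₀ ^ 2)
      have h2 := ((Real.hasDerivAt_sqrt hpos.ne').comp x h1).neg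
      convert h2.hasDerivWithinAt using 1
      · rfl
      field_simp)
    hint
  rw [h]
  simp [Real.sqrt_sq hq₀.le]

private lemma integral_B (q₀ : ℝ) (hq₀ : 0 < q₀) :
    ∫ q in (0:ℝ)..q₀, q ^ 2 / Real.sqrt (q₀ ^ 2 - q ^ 2) = Real.pi * q₀ ^ 2 / 4 := by
  have hint : IntervalIntegrable (fun q => q ^ 2 / Real.sqrt (q₀ ^ 2 - q ^ 2)) volume 0 q₀ :=
    integrable_aux q₀ hq₀ 2
  have h := intervalIntegral.integral_eq_sub_of_hasDeriv_right_of_le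
    (f := fun q => q₀ ^ 2 / 2 * Real.arcsin (q / q₀) - q / 2 * Real.sqrt (q₀ ^ 2 - q ^ 2))
    (f' := fun q => q ^ 2 / Real.sqrt (q₀ ^ 2 - q ^ 2)) hq₀.le
    (Continuous.continuousOn (by
      exact (continuous_const.mul (Real.continuous_arcsin.comp (continuous_id.div_const q₀))).sub
        ((continuous_id.div_const 2).mul ((continuous_const.sub (continuous_pow 2)).sqrt))))
    (fun x hx => by
      have hpos : 0 < q₀ ^ 2 - x ^ 2 := by nlinarith [hx.1, hx.2]
      have hs : 0 < Real.sqrt (q₀ ^ 2 - x ^ 2) := Real.sqrt_pos.2 hpos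
      have hin : Real.sqrt (1 - (x / q₀) ^ 2) = Real.sqrt (q₀ ^ 2 - x ^ 2) / q₀ := by
        rw [show 1 - (x / q₀) ^ 2 = (q₀ ^ 2 - x ^ 2) / q₀ ^ 2 by field_simp,
          Real.sqrt_div hpos.le, Real.sqrt_sq hq₀.le]
      have hne1 : x / q₀ ≠ -1 := by
        have : 0 < x / q₀ := div_pos hx.1 hq₀
        linarith
      have hne2 : x / q₀ ≠ 1 := by
        have : x / q₀ < 1 := (div_lt_one hq₀).2 hx.2
        linarith
      have ha : HasDerivAt (fun q : ℝ => Real.arcsin (q / q₀))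
          (1 / Real.sqrt (1 - (x / q₀) ^ 2) * (1 / q₀)) x := by
        have := (Real.hasDerivAt_arcsin hne1 hne2).comp x ((hasDerivAt_id x).div_const q₀)
        simpa [Function.comp_def] using this
      have h1 : HasDerivAt (fun q : ℝ => q₀ ^ 2 - q ^ 2) (-(2 * x)) x := by
        simpa using (hasDerivAt_pow 2 x).const_sub (q₀ ^ 2)
      have h2 := (Real.hasDerivAt_sqrt hpos.ne').comp x h1
      have h3 := ((ha.const_mul (q₀ ^ 2 / 2)).sub
        (((hasDerivAt_id x).div_const 2).mul h2))
      convert h3.hasDerivWithinAt using 1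
      · rfl
      simp only [Function.comp_apply, id]
      rw [hin]
      have hsq : Real.sqrt (q₀ ^ 2 - x ^ 2) ^ 2 = q₀ ^ 2 - x ^ 2 := Real.sq_sqrt hpos.le
      set s := Real.sqrt (q₀ ^ 2 - x ^ 2) with hs_def
      field_simp
      linear_combination hsq)
    hint
  rw [h]
  simp [Real.sqrt_sq hq₀.le, div_self hq₀.ne', Real.arcsin_one]
  ring

theorem mean_free_fall_ratio_inverse_square (q₀ : ℝ) (hq₀ : 0 < q₀) :
    (∫ q in (0:ℝ)..q₀, q / Real.sqrt (1 / q ^ 2 - 1 / q₀ ^ 2)) /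
      (∫ q in (0:ℝ)..q₀, 1 / Real.sqrt (1 / q ^ 2 - 1 / q₀ ^ 2)) =
    (Real.pi / 4) * q₀ := by
  have hsqrt : ∀ q : ℝ, 0 < q → q ≤ q₀ →
      Real.sqrt (1 / q ^ 2 - 1 / q₀ ^ 2) = Real.sqrt (q₀ ^ 2 - q ^ 2) / (q * q₀) := by
    intro q hq0 hq1
    rw [show 1 / q ^ 2 - 1 / q₀ ^ 2 = (q₀ ^ 2 - q ^ 2) / (q ^ 2 * q₀ ^ 2) by
      field_simp,
      Real.sqrt_div (by nlinarith : (0:ℝ) ≤ q₀ ^ 2 - q ^ 2),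
      show q ^ 2 * q₀ ^ 2 = (q * q₀) ^ 2 by ring, Real.sqrt_sq (by positivity)]
  have hzero : Real.sqrt (1 / (0:ℝ) ^ 2 - 1 / q₀ ^ 2) = 0 := by
    rw [Real.sqrt_eq_zero']
    norm_num
    positivity
  have h1 : (∫ q in (0:ℝ)..q₀, q / Real.sqrt (1 / q ^ 2 - 1 / q₀ ^ 2))
      = ∫ q in (0:ℝ)..q₀, q₀ * (q ^ 2 / Real.sqrt (q₀ ^ 2 - q ^ 2)) := by
    apply intervalIntegral.integral_congr
    intro q hq
    rw [uIcc_of_le hq₀.le] at hq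
    show q / Real.sqrt (1 / q ^ 2 - 1 / q₀ ^ 2) = q₀ * (q ^ 2 / Real.sqrt (q₀ ^ 2 - q ^ 2))
    rcases eq_or_lt_of_le hq.1 with h0 | h0
    · rw [← h0]
      norm_num
    · rw [hsqrt q h0 hq.2, div_div_eq_mul_div]
      ring
  have h2 : (∫ q in (0:ℝ)..q₀, 1 / Real.sqrt (1 / q ^ 2 - 1 / q₀ ^ 2))
      = ∫ q in (0:ℝ)..q₀, q₀ * (q / Real.sqrt (q₀ ^ 2 - q ^ 2)) := by
    apply intervalIntegral.integral_congr
    intro q hq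
    rw [uIcc_of_le hq₀.le] at hq
    show 1 / Real.sqrt (1 / q ^ 2 - 1 / q₀ ^ 2) = q₀ * (q / Real.sqrt (q₀ ^ 2 - q ^ 2))
    rcases eq_or_lt_of_le hq.1 with h0 | h0
    · rw [← h0, hzero]
      simp
    · rw [hsqrt q h0 hq.2, one_div_div]
      ring
  rw [h1, h2, intervalIntegral.integral_const_mul, intervalIntegral.integral_const_mul,
    integral_A q₀ hq₀, integral_B q₀ hq₀]
  field_simp
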